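/- Let -1 < θ1 < 0, -1 < θ2 ≤ 0 with θ1 + θ2 < -1, and let 0 ≤ s1 < s2 ≤ T. With p(s,x) = exp(-σ s^{-α/(2-α)} |x|^{2/(2-α)}) for α ∈ (0,1), σ > 0, there is a constant C (depending on θ1, θ2, σ, α, T) such that for all real τ1 ≠ ρ2, ∫_R |ρ1 - τ1|^{θ1} |ρ2 - ρ1|^{θ2} p(s2 - s1, ρ2 - ρ1) dρ1 ≤ C |ρ2 - τ1|^{1 + θ1 + θ2}. -/

import Mathlib

open MeasureTheory Real Set

/-- Reflection lemma for `IntegrableOn`. -/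
lemma integrableOn_neg_comp {f : ℝ → ℝ} {s : Set ℝ}
    (hf : IntegrableOn f (Neg.neg ⁻¹' s)) :
    IntegrableOn (fun x => f (-x)) s := by
  have h_map : ((volume : Measure ℝ).restrict (Neg.neg ⁻¹' s)).map Neg.neg
      = (volume : Measure ℝ).restrict s := by
    conv => rhs; rw [← Measure.map_neg_eq_self (volume : Measure ℝ),
      measurableEmbedding_neg.restrict_map]
  rw [IntegrableOn, ← h_map, measurableEmbedding_neg.integrable_map_iff]
  have hfun : ((fun x => f (-x)) ∘ Neg.neg) = f := by ext x; simp
  rw [hfun]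
  exact hf

lemma integrableOn_abs_rpow {r : ℝ} (hr : -1 < r) (a : ℝ) (ha : 0 ≤ a) :
    IntegrableOn (fun x : ℝ => |x| ^ r) (Icc (-a) a) := by
  have hpos : IntegrableOn (fun x : ℝ => |x| ^ r) (Icc 0 a) := by
    have h1 : IntegrableOn (fun x : ℝ => x ^ r) (Ioc 0 a) := by
      rw [← intervalIntegrable_iff_integrableOn_Ioc_of_le ha]
      exact intervalIntegral.intervalIntegrable_rpow' hr
    have h2 : IntegrableOn (fun x : ℝ => x ^ r) (Icc 0 a) :=
      (integrableOn_Icc_iff_integrableOn_Ioc).2 h1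
    exact h2.congr_fun (fun x hx => by rw [abs_of_nonneg hx.1]) measurableSet_Icc
  have hneg : IntegrableOn (fun x : ℝ => |x| ^ r) (Icc (-a) 0) := by
    have hpre : Neg.neg ⁻¹' (Icc (-a) (0:ℝ)) = Icc 0 a := by
      ext x; simp [neg_le, le_neg, and_comm]
    have h := integrableOn_neg_comp (f := fun y : ℝ => |y| ^ r) (s := Icc (-a) 0)
      (by rw [hpre]; exact hpos)
    exact h.congr_fun (fun x hx => by simp [abs_neg]) measurableSet_Icc
  have : IntegrableOn (fun x : ℝ => |x| ^ r) (Icc (-a) 0 ∪ Icc 0 a) :=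
    hneg.union hpos
  refine this.mono_set ?_
  intro x hx
  rcases le_total x 0 with h | h
  · exact Or.inl ⟨hx.1, h⟩
  · exact Or.inr ⟨h, hx.2⟩

/-- The model beta-type function is integrable on `ℝ`. -/
lemma integrable_beta_model {θ₁ θ₂ : ℝ} (hθ₁ : -1 < θ₁) (hθ₂ : -1 < θ₂) (hθ₂' : θ₂ ≤ 0)
    (hsum : θ₁ + θ₂ < -1) :
    Integrable (fun t : ℝ => |t| ^ θ₁ * |1 - t| ^ θ₂) := by
  have hmeas : AEStronglyMeasurable (fun t : ℝ => |t| ^ θ₁ * |1 - t| ^ θ₂) volume := by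
    apply Measurable.aestronglyMeasurable
    fun_prop
  -- piece on Ici 2
  have h4 : IntegrableOn (fun t : ℝ => |t| ^ θ₁ * |1 - t| ^ θ₂) (Ici 2) := by
    have hg : IntegrableOn (fun t : ℝ => (2:ℝ) ^ (-θ₂) * t ^ (θ₁ + θ₂)) (Ici 2) := by
      have hg0 : IntegrableOn (fun t : ℝ => (2:ℝ) ^ (-θ₂) * t ^ (θ₁ + θ₂)) (Ioi 1) :=
        (integrableOn_Ioi_rpow_of_lt hsum (by norm_num : (0:ℝ) < 1)).const_mul ((2:ℝ) ^ (-θ₂))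
      exact hg0.mono_set (fun x hx => mem_Ioi.2 (lt_of_lt_of_le one_lt_two (mem_Ici.1 hx)))
    refine Integrable.mono' hg hmeas.restrict ?_
    filter_upwards [ae_restrict_mem measurableSet_Ici] with t ht
    have ht2 : (2:ℝ) ≤ t := ht
    have ht0 : (0:ℝ) < t := by linarith
    have habs : |t| = t := abs_of_pos ht0
    have habs2 : |1 - t| = t - 1 := by rw [abs_sub_comm, abs_of_nonneg (by linarith)]
    have hnn : (0:ℝ) ≤ |t| ^ θ₁ * |1 - t| ^ θ₂ :=
      mul_nonneg (rpow_nonneg (abs_nonneg _) _) (rpow_nonneg (abs_nonneg _) _)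
    rw [Real.norm_of_nonneg hnn, habs, habs2]
    have hb : (t - 1) ^ θ₂ ≤ (t / 2) ^ θ₂ :=
      rpow_le_rpow_of_nonpos (by linarith) (by linarith) hθ₂'
    calc t ^ θ₁ * (t - 1) ^ θ₂ ≤ t ^ θ₁ * (t / 2) ^ θ₂ := by
          exact mul_le_mul_of_nonneg_left hb (rpow_nonneg ht0.le _)
      _ = (2:ℝ) ^ (-θ₂) * t ^ (θ₁ + θ₂) := by
          rw [Real.div_rpow ht0.le (by norm_num : (0:ℝ) ≤ 2), Real.rpow_add ht0,
            Real.rpow_neg (by norm_num : (0:ℝ) ≤ 2)]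
          have h2pos : (0:ℝ) < (2:ℝ) ^ θ₂ := Real.rpow_pos_of_pos two_pos _
          field_simp
          try ring
  -- piece on Iic (-2)
  have h1 : IntegrableOn (fun t : ℝ => |t| ^ θ₁ * |1 - t| ^ θ₂) (Iic (-2)) := by
    have hg : IntegrableOn (fun t : ℝ => |t| ^ (θ₁ + θ₂)) (Iic (-2)) := by
      have hpre : Neg.neg ⁻¹' (Iic (-2:ℝ)) = Ici 2 := by
        ext x; simp [le_neg]
      have hIci : IntegrableOn (fun t : ℝ => |t| ^ (θ₁ + θ₂)) (Ici 2) := by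
        have h0 : IntegrableOn (fun t : ℝ => t ^ (θ₁ + θ₂)) (Ici 2) :=
          (integrableOn_Ioi_rpow_of_lt hsum (by norm_num : (0:ℝ) < 1)).mono_set
            (fun x hx => mem_Ioi.2 (lt_of_lt_of_le one_lt_two (mem_Ici.1 hx)))
        exact h0.congr_fun (fun x hx => by
          rw [abs_of_pos (lt_of_lt_of_le two_pos hx)]) measurableSet_Ici
      have h := integrableOn_neg_comp (f := fun y : ℝ => |y| ^ (θ₁ + θ₂)) (s := Iic (-2))
        (by rw [hpre]; exact hIci)
      exact h.congr_fun (fun x hx => by simp [abs_neg]) measurableSet_Iic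
    refine Integrable.mono' hg hmeas.restrict ?_
    filter_upwards [ae_restrict_mem measurableSet_Iic] with t ht
    have ht2 : t ≤ (-2:ℝ) := ht
    have ht0 : t < 0 := by linarith
    have habs : |t| = -t := abs_of_neg ht0
    have habs2 : |1 - t| = 1 - t := abs_of_pos (by linarith)
    have hnn : (0:ℝ) ≤ |t| ^ θ₁ * |1 - t| ^ θ₂ :=
      mul_nonneg (rpow_nonneg (abs_nonneg _) _) (rpow_nonneg (abs_nonneg _) _)
    rw [Real.norm_of_nonneg hnn, habs, habs2]
    have hb : (1 - t) ^ θ₂ ≤ (-t) ^ θ₂ :=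
      rpow_le_rpow_of_nonpos (by linarith) (by linarith) hθ₂'
    calc (-t) ^ θ₁ * (1 - t) ^ θ₂ ≤ (-t) ^ θ₁ * (-t) ^ θ₂ :=
          mul_le_mul_of_nonneg_left hb (rpow_nonneg (by linarith) _)
      _ = (-t) ^ (θ₁ + θ₂) := (Real.rpow_add (by linarith) _ _).symm
  -- piece on Icc (-2) (1/2)
  have h2 : IntegrableOn (fun t : ℝ => |t| ^ θ₁ * |1 - t| ^ θ₂) (Icc (-2) (1/2)) := by
    have hg : IntegrableOn (fun t : ℝ => (1/2:ℝ) ^ θ₂ * |t| ^ θ₁) (Icc (-2) (1/2)) := by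
      have hg0 : IntegrableOn (fun t : ℝ => (1/2:ℝ) ^ θ₂ * |t| ^ θ₁) (Icc (-2) 2) :=
        (integrableOn_abs_rpow hθ₁ 2 (by norm_num)).const_mul ((1/2:ℝ) ^ θ₂)
      exact hg0.mono_set (fun x hx => ⟨hx.1, by linarith [hx.2]⟩)
    refine Integrable.mono' hg hmeas.restrict ?_
    filter_upwards [ae_restrict_mem measurableSet_Icc] with t ht
    have habs2 : |1 - t| = 1 - t := abs_of_pos (by linarith [ht.2])
    have hnn : (0:ℝ) ≤ |t| ^ θ₁ * |1 - t| ^ θ₂ :=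
      mul_nonneg (rpow_nonneg (abs_nonneg _) _) (rpow_nonneg (abs_nonneg _) _)
    rw [Real.norm_of_nonneg hnn]
    have hb : |1 - t| ^ θ₂ ≤ (1/2:ℝ) ^ θ₂ := by
      rw [habs2]
      exact rpow_le_rpow_of_nonpos (by norm_num) (by linarith [ht.2]) hθ₂'
    calc |t| ^ θ₁ * |1 - t| ^ θ₂ ≤ |t| ^ θ₁ * (1/2:ℝ) ^ θ₂ :=
          mul_le_mul_of_nonneg_left hb (rpow_nonneg (abs_nonneg _) _)
      _ = (1/2:ℝ) ^ θ₂ * |t| ^ θ₁ := mul_comm _ _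
  -- piece on Icc (1/2) 2
  have h3 : IntegrableOn (fun t : ℝ => |t| ^ θ₁ * |1 - t| ^ θ₂) (Icc (1/2) 2) := by
    have hbase : IntegrableOn (fun t : ℝ => |t - 1| ^ θ₂) (Icc (1/2) 2) := by
      have h0 : IntervalIntegrable (fun x : ℝ => |x| ^ θ₂) volume (-1/2) 1 := by
        rw [intervalIntegrable_iff]
        refine IntegrableOn.mono_set (integrableOn_abs_rpow hθ₂ 1 zero_le_one)
          (subset_trans Set.uIoc_subset_uIcc ?_)
        rw [Set.uIcc_of_le (by norm_num : (-1/2:ℝ) ≤ 1)]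
        intro x hx; exact ⟨by linarith [hx.1], hx.2⟩
      have h1' := h0.comp_sub_right 1
      rw [intervalIntegrable_iff] at h1'
      have : IntegrableOn (fun x : ℝ => |x - 1| ^ θ₂) (Ioc (1/2) 2) := by
        refine IntegrableOn.mono_set h1' ?_
        rw [Set.uIoc_of_le (by norm_num : (-1/2 + 1 : ℝ) ≤ 1 + 1)]
        intro x hx; exact ⟨by linarith [hx.1], by linarith [hx.2]⟩
      exact (integrableOn_Icc_iff_integrableOn_Ioc).2 this
    have hg : IntegrableOn (fun t : ℝ => (1/2:ℝ) ^ θ₁ * |t - 1| ^ θ₂) (Icc (1/2) 2) :=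
      hbase.const_mul _
    refine Integrable.mono' hg hmeas.restrict ?_
    filter_upwards [ae_restrict_mem measurableSet_Icc] with t ht
    have hnn : (0:ℝ) ≤ |t| ^ θ₁ * |1 - t| ^ θ₂ :=
      mul_nonneg (rpow_nonneg (abs_nonneg _) _) (rpow_nonneg (abs_nonneg _) _)
    rw [Real.norm_of_nonneg hnn]
    have habs : |t| = t := abs_of_pos (by linarith [ht.1])
    have hb : |t| ^ θ₁ ≤ (1/2:ℝ) ^ θ₁ := by
      rw [habs]
      exact rpow_le_rpow_of_nonpos (by norm_num) ht.1 (le_of_lt (by linarith))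
    have hθ₁le : θ₁ ≤ 0 := by linarith
    calc |t| ^ θ₁ * |1 - t| ^ θ₂ ≤ (1/2:ℝ) ^ θ₁ * |1 - t| ^ θ₂ :=
          mul_le_mul_of_nonneg_right hb (rpow_nonneg (abs_nonneg _) _)
      _ = (1/2:ℝ) ^ θ₁ * |t - 1| ^ θ₂ := by rw [abs_sub_comm]
  -- combine
  rw [← integrableOn_univ]
  have hcover : (univ : Set ℝ) ⊆ Iic (-2) ∪ Icc (-2) (1/2) ∪ Icc (1/2) 2 ∪ Ici 2 := by
    intro x _
    rcases le_total x (-2 : ℝ) with h | h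
    · exact Or.inl (Or.inl (Or.inl h))
    rcases le_total x (1/2 : ℝ) with h' | h'
    · exact Or.inl (Or.inl (Or.inr ⟨h, h'⟩))
    rcases le_total x (2 : ℝ) with h'' | h''
    · exact Or.inl (Or.inr ⟨h', h''⟩)
    · exact Or.inr h''
  exact (((h1.union h2).union h3).union h4).mono_set hcover

theorem integral_kernel_subcritical (α σ T θ₁ θ₂ : ℝ) (hα : 0 < α) (hα1 : α < 1)
    (hσ : 0 < σ) (hT : 0 < T)
    (hθ₁ : -1 < θ₁) (hθ₁' : θ₁ < 0) (hθ₂ : -1 < θ₂) (hθ₂' : θ₂ ≤ 0)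
    (hsum : θ₁ + θ₂ < -1)
    (s₁ s₂ : ℝ) (hs₁ : 0 ≤ s₁) (hs : s₁ < s₂) (hs₂ : s₂ ≤ T) :
    ∃ C : ℝ, 0 < C ∧ ∀ τ₁ ρ₂ : ℝ, τ₁ ≠ ρ₂ →
      (∫ ρ₁ : ℝ, |ρ₁ - τ₁| ^ θ₁ * |ρ₂ - ρ₁| ^ θ₂ *
          Real.exp (-σ * (s₂ - s₁) ^ (-(α / (2 - α))) * |ρ₂ - ρ₁| ^ (2 / (2 - α))))
        ≤ C * |ρ₂ - τ₁| ^ (1 + θ₁ + θ₂) := by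
  set F : ℝ → ℝ := fun t => |t| ^ θ₁ * |1 - t| ^ θ₂ with hF
  have hFint : Integrable F := integrable_beta_model hθ₁ hθ₂ hθ₂' hsum
  set C₀ : ℝ := ∫ t, F t with hC₀
  have hC₀nn : 0 ≤ C₀ :=
    integral_nonneg fun t =>
      mul_nonneg (rpow_nonneg (abs_nonneg _) _) (rpow_nonneg (abs_nonneg _) _)
  refine ⟨C₀ + 1, by linarith, fun τ₁ ρ₂ hne => ?_⟩
  set d : ℝ := ρ₂ - τ₁ with hd
  have hd0 : d ≠ 0 := sub_ne_zero.2 (Ne.symm hne)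
  have hda : 0 < |d| := abs_pos.2 hd0
  -- the beta-type dominating function
  set g : ℝ → ℝ := fun x => |x - τ₁| ^ θ₁ * |ρ₂ - x| ^ θ₂ with hg
  have hgeq : ∀ x, g x = (|d| ^ θ₁ * |d| ^ θ₂) * F ((x - τ₁) / d) := by
    intro x
    have h1 : |(x - τ₁) / d| = |x - τ₁| / |d| := abs_div _ _
    have h2 : (1 : ℝ) - (x - τ₁) / d = (ρ₂ - x) / d := by
      rw [eq_div_iff hd0, sub_mul, div_mul_cancel₀ _ hd0, hd]
      ring
    have h3 : F ((x - τ₁) / d)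
        = (|x - τ₁| ^ θ₁ / |d| ^ θ₁) * (|ρ₂ - x| ^ θ₂ / |d| ^ θ₂) := by
      simp only [hF, h2, abs_div]
      rw [Real.div_rpow (abs_nonneg _) (abs_nonneg _),
        Real.div_rpow (abs_nonneg _) (abs_nonneg _)]
    rw [h3]
    have hd1 : |d| ^ θ₁ ≠ 0 := (Real.rpow_pos_of_pos hda _).ne'
    have hd2 : |d| ^ θ₂ ≠ 0 := (Real.rpow_pos_of_pos hda _).ne'
    field_simp
    try ring
  have hcomp : Integrable (fun x => F ((x - τ₁) / d)) := by
    have h1 : Integrable (fun x => F (x / d)) := hFint.comp_div hd0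
    exact MeasureTheory.Integrable.comp_sub_right (μ := (volume : Measure ℝ)) h1 τ₁
  have hgint : Integrable g := by
    have := hcomp.const_mul (|d| ^ θ₁ * |d| ^ θ₂)
    exact this.congr (Filter.Eventually.of_forall fun x => (hgeq x).symm)
  have hgval : ∫ x, g x = |d| ^ (1 + θ₁ + θ₂) * C₀ := by
    have h1 : ∫ x, F ((x - τ₁) / d) = |d| * C₀ := by
      have h2 : ∫ x, F ((x - τ₁) / d) = ∫ x, F (x / d) := by
        have := integral_sub_right_eq_self (μ := (volume : Measure ℝ)) (fun x => F (x / d)) τ₁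
        simpa using this
      rw [h2]
      have := MeasureTheory.Measure.integral_comp_div F d
      rw [this, smul_eq_mul, hC₀]
    calc ∫ x, g x = ∫ x, (|d| ^ θ₁ * |d| ^ θ₂) * F ((x - τ₁) / d) := by
          congr 1; ext x; exact hgeq x
      _ = (|d| ^ θ₁ * |d| ^ θ₂) * ∫ x, F ((x - τ₁) / d) := integral_const_mul _ _
      _ = (|d| ^ θ₁ * |d| ^ θ₂) * (|d| * C₀) := by rw [h1]
      _ = |d| ^ (1 + θ₁ + θ₂) * C₀ := by
          rw [Real.rpow_add hda, Real.rpow_add hda, Real.rpow_one]; ring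
  -- compare the integrals
  have hmono : (∫ ρ₁ : ℝ, |ρ₁ - τ₁| ^ θ₁ * |ρ₂ - ρ₁| ^ θ₂ *
      Real.exp (-σ * (s₂ - s₁) ^ (-(α / (2 - α))) * |ρ₂ - ρ₁| ^ (2 / (2 - α))))
      ≤ ∫ x, g x := by
    refine integral_mono_of_nonneg ?_ hgint ?_
    · refine Filter.Eventually.of_forall fun x => ?_
      exact mul_nonneg (mul_nonneg (rpow_nonneg (abs_nonneg _) _)
        (rpow_nonneg (abs_nonneg _) _)) (Real.exp_nonneg _)
    · refine Filter.Eventually.of_forall fun x => ?_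
      have hE : -σ * (s₂ - s₁) ^ (-(α / (2 - α))) * |ρ₂ - x| ^ (2 / (2 - α)) ≤ 0 := by
        have h1 : 0 < (s₂ - s₁) ^ (-(α / (2 - α))) :=
          Real.rpow_pos_of_pos (by linarith) _
        have h2 : 0 ≤ |ρ₂ - x| ^ (2 / (2 - α)) := rpow_nonneg (abs_nonneg _) _
        have : 0 ≤ σ * (s₂ - s₁) ^ (-(α / (2 - α))) * |ρ₂ - x| ^ (2 / (2 - α)) :=
          mul_nonneg (mul_nonneg hσ.le h1.le) h2
        nlinarith
      have hexp : Real.exp (-σ * (s₂ - s₁) ^ (-(α / (2 - α))) * |ρ₂ - x| ^ (2 / (2 - α))) ≤ 1 :=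
        Real.exp_le_one_iff.2 hE
      have hnn : (0:ℝ) ≤ |x - τ₁| ^ θ₁ * |ρ₂ - x| ^ θ₂ :=
        mul_nonneg (rpow_nonneg (abs_nonneg _) _) (rpow_nonneg (abs_nonneg _) _)
      calc |x - τ₁| ^ θ₁ * |ρ₂ - x| ^ θ₂ *
            Real.exp (-σ * (s₂ - s₁) ^ (-(α / (2 - α))) * |ρ₂ - x| ^ (2 / (2 - α)))
          ≤ |x - τ₁| ^ θ₁ * |ρ₂ - x| ^ θ₂ * 1 := by
            exact mul_le_mul_of_nonneg_left hexp hnn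
        _ = g x := by rw [mul_one]
  calc (∫ ρ₁ : ℝ, |ρ₁ - τ₁| ^ θ₁ * |ρ₂ - ρ₁| ^ θ₂ *
        Real.exp (-σ * (s₂ - s₁) ^ (-(α / (2 - α))) * |ρ₂ - ρ₁| ^ (2 / (2 - α))))
      ≤ ∫ x, g x := hmono
    _ = |d| ^ (1 + θ₁ + θ₂) * C₀ := hgval
    _ ≤ (C₀ + 1) * |ρ₂ - τ₁| ^ (1 + θ₁ + θ₂) := by
        have hnn := rpow_nonneg (abs_nonneg d) (1 + θ₁ + θ₂)
        nlinarith
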